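/- Let N ≥ 3 and G ∈ [0,1), and let q^{(N-1)} be any ordered probability (N−1)-vector with Gini index G. If the N-vector q^{(N)} defined by q_k^{(N)} = a + b·q_k^{(N-1)} (with q_N^{(N-1)} := 0) is a probability vector with Gini index G, then necessarily b = G(N−1)/(G(N−2)+1) and a = (1−G)/(N·(G(N−2)+1)). Conversely, these values of a, b always yield a probability vector with Gini index G. -/
import Mathlib


open Finset Real Filter

/-- Coefficient a_N(G) of the Gini-stable process. -/
noncomputable def giniA (G : ℝ) (N : ℕ) : ℝ :=
  (1 - G) / ((N : ℝ) * (G * ((N : ℝ) - 2) + 1))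

/-- Coefficient b_N(G) of the Gini-stable process. -/
noncomputable def giniB (G : ℝ) (N : ℕ) : ℝ :=
  G * ((N : ℝ) - 1) / (G * ((N : ℝ) - 2) + 1)

/-- Entries p_k^{(N,G)} of the Gini-stable process (1-indexed in k). -/
noncomputable def giniP (G : ℝ) : ℕ → ℕ → ℝ
  | 0, _ => 0
  | 1, k => if k = 1 then 1 else 0
  | N + 2, k =>
      giniA G (N + 2) + giniB G (N + 2) * (if k ≤ N + 1 then giniP G (N + 1) k else 0)

/-- Harmonic number H_m = ∑_{i=1}^m 1/i, with H 0 = 0. -/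
noncomputable def H (m : ℕ) : ℝ := ∑ i ∈ Finset.range m, (1 : ℝ) / (i + 1)

theorem stmt4 (N : ℕ) (hN : 3 ≤ N) (G : ℝ) (hG0 : 0 ≤ G) (hG1 : G < 1)
    (q : ℕ → ℝ)
    (hord : ∀ k, 1 ≤ k → k < N - 1 → q (k + 1) ≤ q k)
    (hnonneg : ∀ k, 1 ≤ k → k ≤ N - 1 → 0 ≤ q k)
    (hsum : ∑ k ∈ Finset.Icc 1 (N - 1), q k = 1)
    (hGini : (1 / ((N : ℝ) - 2)) *
      ∑ k ∈ Finset.Icc 1 (N - 1), (((N : ℝ) - 1) - 2 * (k : ℝ) + 1) * q k = G)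
    (a b : ℝ) :
    ((∑ k ∈ Finset.Icc 1 N, (a + b * (if k ≤ N - 1 then q k else 0)) = 1 ∧
      (1 / ((N : ℝ) - 1)) *
        ∑ k ∈ Finset.Icc 1 N,
          ((N : ℝ) - 2 * (k : ℝ) + 1) * (a + b * (if k ≤ N - 1 then q k else 0)) = G)
      ↔
     (b = G * ((N : ℝ) - 1) / (G * ((N : ℝ) - 2) + 1) ∧
      a = (1 - G) / ((N : ℝ) * (G * ((N : ℝ) - 2) + 1)))) := by

  obtain ⟨m, rfl⟩ : ∃ m, N = m + 3 := ⟨N - 3, by omega⟩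
  have hsub : m + 3 - 1 = m + 2 := rfl
  rw [hsub] at hsum hGini ⊢
  -- Gauss sum
  have gauss : ∀ n : ℕ, ∑ k ∈ Finset.Icc 1 n, (k : ℝ) = n * (n + 1) / 2 := by
    intro n
    induction n with
    | zero => simp
    | succ j ih =>
        rw [Finset.sum_Icc_succ_top (by omega), ih]
        push_cast; ring
  have csum : ∑ k ∈ Finset.Icc 1 (m + 3), (((m + 3 : ℕ) : ℝ) - 2 * (k : ℝ) + 1) = 0 := by
    have h : ∀ k : ℕ, ((m + 3 : ℕ) : ℝ) - 2 * (k : ℝ) + 1 = ((m : ℝ) + 4) - 2 * (k : ℝ) := by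
      intro k; push_cast; ring
    simp_rw [h, Finset.sum_sub_distrib, Finset.sum_const, ← Finset.mul_sum, gauss,
      Nat.card_Icc]
    push_cast; ring
  -- value of the weighted q-sum
  have hmc : (0 : ℝ) ≤ (m : ℝ) := Nat.cast_nonneg m
  have hm2 : ((m + 3 : ℕ) : ℝ) - 2 ≠ 0 := by push_cast; linarith
  have hS : ∑ k ∈ Finset.Icc 1 (m + 2), (((m + 3 : ℕ) : ℝ) - 1 - 2 * (k : ℝ) + 1) * q k
      = G * ((m : ℝ) + 1) := by
    have h := hGini
    rw [one_div, inv_mul_eq_div, div_eq_iff hm2] at h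
    push_cast at h ⊢
    linarith [h]
  -- split the sums over Icc 1 (m+3)
  have e1 : ∑ k ∈ Finset.Icc 1 (m + 3), (a + b * (if k ≤ m + 2 then q k else 0))
      = ((m : ℝ) + 3) * a + b := by
    rw [Finset.sum_Icc_succ_top (by omega)]
    rw [if_neg (by omega)]
    have : ∑ k ∈ Finset.Icc 1 (m + 2), (a + b * (if k ≤ m + 2 then q k else 0))
        = ∑ k ∈ Finset.Icc 1 (m + 2), (a + b * q k) := by
      refine Finset.sum_congr rfl fun k hk => ?_
      rw [if_pos (Finset.mem_Icc.mp hk).2]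
    rw [this, Finset.sum_add_distrib, Finset.sum_const, ← Finset.mul_sum, hsum, Nat.card_Icc]
    push_cast; ring
  have e2 : ∑ k ∈ Finset.Icc 1 (m + 3),
      (((m + 3 : ℕ) : ℝ) - 2 * (k : ℝ) + 1) * (a + b * (if k ≤ m + 2 then q k else 0))
      = b * (G * ((m : ℝ) + 1) + 1) := by
    have expand : ∀ k ∈ Finset.Icc 1 (m + 3),
        (((m + 3 : ℕ) : ℝ) - 2 * (k : ℝ) + 1) * (a + b * (if k ≤ m + 2 then q k else 0))
        = (((m + 3 : ℕ) : ℝ) - 2 * (k : ℝ) + 1) * a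
          + b * ((((m + 3 : ℕ) : ℝ) - 2 * (k : ℝ) + 1) * (if k ≤ m + 2 then q k else 0)) := by
      intro k _; ring
    rw [Finset.sum_congr rfl expand, Finset.sum_add_distrib, ← Finset.sum_mul, csum,
      ← Finset.mul_sum]
    have split : ∑ k ∈ Finset.Icc 1 (m + 3),
        (((m + 3 : ℕ) : ℝ) - 2 * (k : ℝ) + 1) * (if k ≤ m + 2 then q k else 0)
        = ∑ k ∈ Finset.Icc 1 (m + 2), (((m + 3 : ℕ) : ℝ) - 2 * (k : ℝ) + 1) * q k := by
      rw [Finset.sum_Icc_succ_top (by omega), if_neg (by omega), mul_zero, add_zero]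
      refine Finset.sum_congr rfl fun k hk => ?_
      rw [if_pos (Finset.mem_Icc.mp hk).2]
    rw [split]
    have rew : ∑ k ∈ Finset.Icc 1 (m + 2), (((m + 3 : ℕ) : ℝ) - 2 * (k : ℝ) + 1) * q k
        = (∑ k ∈ Finset.Icc 1 (m + 2), (((m + 3 : ℕ) : ℝ) - 1 - 2 * (k : ℝ) + 1) * q k)
          + ∑ k ∈ Finset.Icc 1 (m + 2), q k := by
      rw [← Finset.sum_add_distrib]
      refine Finset.sum_congr rfl fun k hk => ?_
      ring
    rw [rew, hS, hsum]
    ring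
  rw [e1, e2]
  -- now pure algebra
  have hD : 0 < G * (((m + 3 : ℕ) : ℝ) - 2) + 1 := by
    push_cast
    nlinarith
  have hD' : G * (((m + 3 : ℕ) : ℝ) - 2) + 1 = G * ((m : ℝ) + 1) + 1 := by push_cast; ring
  have hN1 : ((m + 3 : ℕ) : ℝ) - 1 ≠ 0 := by push_cast; linarith
  have hN0 : ((m + 3 : ℕ) : ℝ) ≠ 0 := by push_cast; linarith
  have hA : (m : ℝ) + 2 ≠ 0 := by linarith
  rw [hD']
  have hDne : G * ((m : ℝ) + 1) + 1 ≠ 0 := by rw [← hD']; exact ne_of_gt hD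
  constructor
  · rintro ⟨h1, h2⟩
    have hb : b = G * (((m + 3 : ℕ) : ℝ) - 1) / (G * ((m : ℝ) + 1) + 1) := by
      rw [eq_div_iff hDne]
      rw [one_div, inv_mul_eq_div, div_eq_iff hN1] at h2
      push_cast at h2 ⊢
      linear_combination h2
    refine ⟨hb, ?_⟩
    rw [hb] at h1
    rw [eq_div_iff (mul_ne_zero hN0 hDne)]
    push_cast at h1 ⊢
    field_simp at h1
    linear_combination h1
  · rintro ⟨hb, ha⟩
    subst hb ha
    constructor
    · push_cast
      field_simp
      ring
    · push_cast
      rw [div_mul_cancel₀ _ hDne, one_div, inv_mul_eq_div,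
        div_eq_iff (by linarith : ((m : ℝ) + 3 - 1) ≠ 0)]
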